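/- Any class of finite digraphs for which there is a uniform bound on the size of sets of pairwise disjoint partial pairs is well quasi-ordered under the surjective homomorphism ordering. -/

import Mathlib

/-- A finite structure with a single binary relation (digraph/graph model). -/
structure FinBinRel where
  n : ℕ
  rel : Fin n → Fin n → Prop

/-- `f` is a homomorphism from `A` to `B`: it maps related pairs to related pairs. -/
def IsHom (A B : FinBinRel) (f : Fin A.n → Fin B.n) : Prop :=
  ∀ x y, A.rel x y → B.rel (f x) (f y)

/-- `f` is a strong homomorphism: a homomorphism such that every related pair of
elements of the image is the image of a related pair. -/
def IsStrongHom (A B : FinBinRel) (f : Fin A.n → Fin B.n) : Prop :=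
  IsHom A B f ∧
    ∀ p q : Fin B.n, B.rel p q → (∃ a, f a = p) → (∃ b, f b = q) →
      ∃ u v, A.rel u v ∧ f u = p ∧ f v = q

/-- Homomorphic image ordering: `A ⪯ B` iff there is a surjective homomorphism `B → A`. -/
def HomLe (A B : FinBinRel) : Prop :=
  ∃ f : Fin B.n → Fin A.n, Function.Surjective f ∧ IsHom B A f

/-- Strong homomorphic image ordering: `A ⪯ B` iff there is a surjective strong
homomorphism `B → A`. -/
def StrongLe (A B : FinBinRel) : Prop :=
  ∃ f : Fin B.n → Fin A.n, Function.Surjective f ∧ IsStrongHom B A f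

/-- Isomorphism of binary relational structures. -/
def BinIso (A B : FinBinRel) : Prop :=
  ∃ e : Fin A.n ≃ Fin B.n, ∀ x y, A.rel x y ↔ B.rel (e x) (e y)

/-- A class `C` is well quasi-ordered by `r`: every infinite sequence of members of `C`
contains a "good pair". (For orderings on finite structures respecting size this is
equivalent to having no infinite antichain.) -/
def IsWqo (r : FinBinRel → FinBinRel → Prop) (C : Set FinBinRel) : Prop :=
  ∀ f : ℕ → FinBinRel, (∀ i, f i ∈ C) → ∃ i j, i < j ∧ r (f i) (f j)

/-- A reflexive graph: symmetric relation with a loop at every vertex. -/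
def ReflGraph (A : FinBinRel) : Prop :=
  (∀ x, A.rel x x) ∧ (∀ x y, A.rel x y → A.rel y x)

/-- An irreflexive graph: symmetric and loopless. -/
def IrrGraph (A : FinBinRel) : Prop :=
  (∀ x, ¬ A.rel x x) ∧ (∀ x y, A.rel x y → A.rel y x)

/-- The irreflexive complete graph on `n` vertices. -/
def Kirr (n : ℕ) : FinBinRel := ⟨n, fun i j => i ≠ j⟩

/-- The complete reflexive graph/digraph on `n` vertices (all pairs, including loops). -/
def Kcompl (n : ℕ) : FinBinRel := ⟨n, fun _ _ => True⟩

/-- The subcomplete reflexive graph `N_{n,k}` (for `2k ≤ n`): the complete reflexive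
graph on `n` vertices with the `k` disjoint edges `{0,1},{2,3},…,{2k-2,2k-1}` deleted. -/
def Ngraph (n k : ℕ) : FinBinRel :=
  ⟨n, fun i j => ¬ ∃ m, m < k ∧
      ((i.val = 2 * m ∧ j.val = 2 * m + 1) ∨ (j.val = 2 * m ∧ i.val = 2 * m + 1))⟩

/-- The subcomplete digraph `N⃗_{n,k}` (for `2k ≤ n`): the complete reflexive digraph
on `n` vertices with the `k` disjoint directed edges `(0,1),(2,3),…,(2k-2,2k-1)` removed. -/
def Ndigraph (n k : ℕ) : FinBinRel :=
  ⟨n, fun i j => ¬ ∃ m, m < k ∧ i.val = 2 * m ∧ j.val = 2 * m + 1⟩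

/-- `D` has a set of `k` pairwise disjoint edges (all `2k` endpoints distinct). -/
def HasDisjointEdges (D : FinBinRel) (k : ℕ) : Prop :=
  ∃ a b : Fin k → Fin D.n,
    Function.Injective (Sum.elim a b) ∧ ∀ i, D.rel (a i) (b i)

/-- `D` has a set of `k` pairwise disjoint partial pairs: pairs `a ≠ b` not connected
bidirectionally, with all `2k` vertices distinct. -/
def HasDisjointPartialPairs (D : FinBinRel) (k : ℕ) : Prop :=
  ∃ a b : Fin k → Fin D.n,
    Function.Injective (Sum.elim a b) ∧
    ∀ i, ¬ (D.rel (a i) (b i) ∧ D.rel (b i) (a i))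

section Aux

lemma exists_strictMono_mem (s : Set ℕ) (h : s.Infinite) :
    ∃ e : ℕ → ℕ, StrictMono e ∧ ∀ n, e n ∈ s := by
  classical
  haveI : Infinite s := Set.infinite_coe_iff.mpr h
  refine ⟨Nat.orderEmbeddingOfSet s, (Nat.orderEmbeddingOfSet s).strictMono, fun n => ?_⟩
  exact (Set.ext_iff.mp (Nat.orderEmbeddingOfSet_range s) _).mp ⟨n, rfl⟩

lemma exists_surj_of_card (α β : Type*) [Finite α] [Finite β]
    (h1 : Nat.card β ≤ Nat.card α) (h2 : Nat.card β = 0 → Nat.card α = 0) :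
    ∃ g : α → β, Function.Surjective g := by
  classical
  cases isEmpty_or_nonempty β with
  | inl hβ =>
    have hb0 : Nat.card β = 0 := by
      haveI := hβ; simp [Nat.card_eq_zero]
    have hα : IsEmpty α := by
      rcases Nat.card_eq_zero.mp (h2 hb0) with h | h
      · exact h
      · haveI := h; exact (not_finite α).elim
    exact ⟨fun a => (hα.false a).elim, fun b => (hβ.false b).elim⟩
  | inr hβ =>
    haveI := Fintype.ofFinite α
    haveI := Fintype.ofFinite β
    rw [Nat.card_eq_fintype_card, Nat.card_eq_fintype_card] at h1
    obtain ⟨e⟩ := Function.Embedding.nonempty_of_card_le h1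
    refine ⟨fun a => if h : ∃ b, e b = a then h.choose else Classical.arbitrary β, fun b => ?_⟩
    refine ⟨e b, ?_⟩
    have hx : ∃ b', e b' = e b := ⟨b, rfl⟩
    simp only [dif_pos hx]
    exact e.injective hx.choose_spec

/-- The "type" of a vertex relative to a core enumeration. -/
def tyOf (D : FinBinRel) {m : ℕ} (σ : Fin m → Fin D.n) (v : Fin D.n) : Fin m → Prop × Prop :=
  fun s => (D.rel (σ s) v, D.rel v (σ s))

/-- The class of vertices outside the core of a given type. -/
def Cls (D : FinBinRel) {m : ℕ} (σ : Fin m → Fin D.n) (τ : Fin m → Prop × Prop) : Type :=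
  {v : Fin D.n // (∀ s, σ s ≠ v) ∧ tyOf D σ v = τ}

instance (D : FinBinRel) {m : ℕ} (σ : Fin m → Fin D.n) (τ : Fin m → Prop × Prop) :
    Finite (Cls D σ τ) := Subtype.finite

lemma exists_core (N : ℕ) (D : FinBinRel) (hrefl : ∀ x, D.rel x x)
    (hb : ∀ k, HasDisjointPartialPairs D k → k ≤ N) :
    ∃ m, m ≤ 2 * N ∧ ∃ σ : Fin m → Fin D.n, Function.Injective σ ∧
      ∀ v w, (∀ s, σ s ≠ v) → (∀ s, σ s ≠ w) → D.rel v w := by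
  classical
  set P := HasDisjointPartialPairs D with hPdef
  have hP0 : P 0 := ⟨Fin.elim0, Fin.elim0, Function.injective_of_subsingleton _, fun i => i.elim0⟩
  set k := Nat.findGreatest P N with hkdef
  have hPk : P k := Nat.findGreatest_spec (Nat.zero_le N) hP0
  have hmax : ¬ P (k + 1) := by
    intro hp
    exact Nat.findGreatest_is_greatest (Nat.lt_succ_self k) (hb _ hp) hp
  obtain ⟨a, b, hinj, hpart⟩ := hPk
  have hkN : k ≤ N := hb k ⟨a, b, hinj, hpart⟩
  refine ⟨k + k, by omega, fun i => Sum.elim a b (finSumFinEquiv.symm i),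
    hinj.comp finSumFinEquiv.symm.injective, ?_⟩
  intro v w hv hw
  by_contra hvw
  have hv' : ∀ s : Fin k ⊕ Fin k, Sum.elim a b s ≠ v := fun s => by
    have := hv (finSumFinEquiv s)
    simpa using this
  have hw' : ∀ s : Fin k ⊕ Fin k, Sum.elim a b s ≠ w := fun s => by
    have := hw (finSumFinEquiv s)
    simpa using this
  have hav : ∀ i, a i ≠ v := fun i => hv' (Sum.inl i)
  have hbv : ∀ i, b i ≠ v := fun i => hv' (Sum.inr i)
  have haw : ∀ i, a i ≠ w := fun i => hw' (Sum.inl i)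
  have hbw : ∀ i, b i ≠ w := fun i => hw' (Sum.inr i)
  have hne : v ≠ w := fun h => hvw (h ▸ hrefl v)
  refine hmax ⟨Fin.snoc a v, Fin.snoc b w, ?_, ?_⟩
  · intro x y hxy
    rcases x with x | x <;> rcases y with y | y <;>
      simp only [Sum.elim_inl, Sum.elim_inr] at hxy <;>
      rcases Fin.eq_castSucc_or_eq_last x with ⟨x', rfl⟩ | rfl <;>
      rcases Fin.eq_castSucc_or_eq_last y with ⟨y', rfl⟩ | rfl <;>
      simp only [Fin.snoc_castSucc, Fin.snoc_last] at hxy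
    all_goals first
      | rfl
      | (exact absurd hxy (hav _))
      | (exact absurd hxy.symm (hav _))
      | (exact absurd hxy (hbv _))
      | (exact absurd hxy.symm (hbv _))
      | (exact absurd hxy (haw _))
      | (exact absurd hxy.symm (haw _))
      | (exact absurd hxy (hbw _))
      | (exact absurd hxy.symm (hbw _))
      | (exact absurd hxy hne)
      | (exact absurd hxy.symm hne)
      | (exact congrArg (Sum.map Fin.castSucc Fin.castSucc)
          (hinj (show Sum.elim a b (Sum.inl x') = Sum.elim a b (Sum.inl y') from hxy)))
      | (exact congrArg (Sum.map Fin.castSucc Fin.castSucc)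
          (hinj (show Sum.elim a b (Sum.inr x') = Sum.elim a b (Sum.inr y') from hxy)))
      | (exact absurd (hinj (show Sum.elim a b (Sum.inl x') = Sum.elim a b (Sum.inr y') from hxy)) (by simp))
      | (exact absurd (hinj (show Sum.elim a b (Sum.inr x') = Sum.elim a b (Sum.inl y') from hxy)) (by simp))
  · intro i
    rcases Fin.eq_castSucc_or_eq_last i with ⟨j, rfl⟩ | rfl
    · simpa [Fin.snoc_castSucc] using hpart j
    · simp only [Fin.snoc_last]
      intro hc
      exact hvw hc.1

end Aux

lemma keyHom (A B : FinBinRel) (m : ℕ)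
    (σA : Fin m → Fin A.n) (σB : Fin m → Fin B.n)
    (hBi : Function.Injective σB)
    (hAc : ∀ v w, (∀ s, σA s ≠ v) → (∀ s, σA s ≠ w) → A.rel v w)
    (hmat : ∀ s t, B.rel (σB s) (σB t) → A.rel (σA s) (σA t))
    (hcard : ∀ τ, Nat.card (Cls A σA τ) ≤ Nat.card (Cls B σB τ))
    (hzero : ∀ τ, Nat.card (Cls A σA τ) = 0 → Nat.card (Cls B σB τ) = 0) :
    HomLe A B := by
  classical
  have hsurj : ∀ τ, ∃ g : Cls B σB τ → Cls A σA τ, Function.Surjective g :=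
    fun τ => exists_surj_of_card _ _ (hcard τ) (hzero τ)
  choose g hg using hsurj
  set h : Fin B.n → Fin A.n := fun v =>
    if hv : ∃ s, σB s = v then σA hv.choose
    else (g (tyOf B σB v) ⟨v, fun s hs => hv ⟨s, hs⟩, rfl⟩).val with hdef
  have hhσ : ∀ s, h (σB s) = σA s := by
    intro s
    have hv : ∃ s', σB s' = σB s := ⟨s, rfl⟩
    simp only [hdef]
    rw [dif_pos hv]
    exact congrArg σA (hBi hv.choose_spec)
  have hout : ∀ v, (¬ ∃ s, σB s = v) →
      (∀ s, σA s ≠ h v) ∧ tyOf A σA (h v) = tyOf B σB v := by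
    intro v hv
    simp only [hdef]
    rw [dif_neg hv]
    exact (g (tyOf B σB v) ⟨v, fun s hs => hv ⟨s, hs⟩, rfl⟩).prop
  refine ⟨h, ?_, ?_⟩
  · intro u
    by_cases hu : ∃ s, σA s = u
    · obtain ⟨s, rfl⟩ := hu
      exact ⟨σB s, hhσ s⟩
    · have hu' : ∀ s, σA s ≠ u := fun s hs => hu ⟨s, hs⟩
      suffices hgen : ∀ (τ) (x : Cls A σA τ), ∃ v, h v = x.val by
        exact hgen (tyOf A σA u) ⟨u, hu', rfl⟩
      intro τ x
      obtain ⟨b, hb⟩ := hg τ x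
      obtain ⟨bv, hb1, hb2⟩ := b
      have hbv : ¬ ∃ s, σB s = bv := fun hc => hb1 hc.choose hc.choose_spec
      refine ⟨bv, ?_⟩
      simp only [hdef]
      rw [dif_neg hbv]
      subst hb2
      exact congrArg Subtype.val hb
  · intro x y hxy
    by_cases hx : ∃ s, σB s = x <;> by_cases hy : ∃ s, σB s = y
    · obtain ⟨s, rfl⟩ := hx; obtain ⟨t, rfl⟩ := hy
      rw [hhσ, hhσ]; exact hmat s t hxy
    · obtain ⟨s, rfl⟩ := hx
      obtain ⟨ho, hty⟩ := hout y hy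
      rw [hhσ]
      have h1 : A.rel (σA s) (h y) = B.rel (σB s) y :=
        congrArg Prod.fst (congrFun hty s)
      exact cast h1.symm hxy
    · obtain ⟨t, rfl⟩ := hy
      obtain ⟨ho, hty⟩ := hout x hx
      rw [hhσ]
      have h1 : A.rel (h x) (σA t) = B.rel x (σB t) :=
        congrArg Prod.snd (congrFun hty t)
      exact cast h1.symm hxy
    · exact hAc _ _ (hout x hx).1 (hout y hy).1

/-- Any class of (reflexive) digraphs with a uniform bound on the size of sets of
pairwise disjoint partial pairs is well quasi-ordered under the surjective homomorphism
ordering. (In the paper this lemma is applied within the class of reflexive digraphs.) -/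
theorem stmt_17 (N : ℕ) (C : Set FinBinRel)
    (hrefl : ∀ D ∈ C, ∀ x : Fin D.n, D.rel x x)
    (hbound : ∀ D ∈ C, ∀ k, HasDisjointPartialPairs D k → k ≤ N) :
    IsWqo HomLe C := by
  classical
  intro f hf
  have hcore : ∀ i : ℕ, ∃ m, m ≤ 2 * N ∧ ∃ σ : Fin m → Fin (f i).n,
      Function.Injective σ ∧ ∀ v w, (∀ s, σ s ≠ v) → (∀ s, σ s ≠ w) → (f i).rel v w :=
    fun i => exists_core N (f i) (hrefl _ (hf i)) (hbound _ (hf i))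
  choose m hm σ hσinj hσc using hcore
  -- Stage 1: fix the core size
  obtain ⟨M, hM⟩ := Finite.exists_infinite_fiber
    (fun i => (⟨m i, Nat.lt_succ_of_le (hm i)⟩ : Fin (2 * N + 1)))
  obtain ⟨e1, he1sm, he1⟩ := exists_strictMono_mem _ (Set.infinite_coe_iff.mp hM)
  have hme : ∀ n, m (e1 n) = M.val :=
    fun n => congrArg Fin.val (Set.mem_singleton_iff.mp (he1 n))
  set σ1 : ∀ n, Fin M.val → Fin (f (e1 n)).n :=
    fun n s => σ (e1 n) (Fin.cast (hme n).symm s) with hσ1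
  have hσ1c : ∀ n v w, (∀ s, σ1 n s ≠ v) → (∀ s, σ1 n s ≠ w) → (f (e1 n)).rel v w := by
    intro n v w hv hw
    exact hσc (e1 n) v w (fun s' => hv (Fin.cast (hme n) s')) (fun s' => hw (Fin.cast (hme n) s'))
  -- Stage 2: fix the core structure and the zero pattern of type classes
  obtain ⟨K, hK⟩ := Finite.exists_infinite_fiber
    (fun n => ((fun s t => (f (e1 n)).rel (σ1 n s) (σ1 n t),
        fun τ => Nat.card (Cls (f (e1 n)) (σ1 n) τ) = 0) :
      (Fin M.val → Fin M.val → Prop) × ((Fin M.val → Prop × Prop) → Prop)))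
  obtain ⟨e2, he2sm, he2⟩ := exists_strictMono_mem _ (Set.infinite_coe_iff.mp hK)
  have hkey : ∀ n, ((fun s t => (f (e1 (e2 n))).rel (σ1 (e2 n) s) (σ1 (e2 n) t),
        fun τ => Nat.card (Cls (f (e1 (e2 n))) (σ1 (e2 n)) τ) = 0) :
      (Fin M.val → Fin M.val → Prop) × ((Fin M.val → Prop × Prop) → Prop)) = K :=
    fun n => Set.mem_singleton_iff.mp (he2 n)
  -- Stage 3: Dickson's lemma on the class counts
  obtain ⟨i, j, hij, hcle⟩ := (Set.IsPWO.pi (ι := Fin M.val → Prop × Prop) (α := fun _ => ℕ)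
    (s := fun _ => Set.univ) (fun _ => Set.isPWO_of_wellQuasiOrderedLE _)).exists_lt
    (f := fun n τ => Nat.card (Cls (f (e1 (e2 n))) (σ1 (e2 n)) τ)) (fun n => by simp)
  refine ⟨e1 (e2 i), e1 (e2 j), he1sm (he2sm hij), ?_⟩
  have hKij := (hkey i).trans (hkey j).symm
  have hmat := congrArg Prod.fst hKij
  have hpat := congrArg Prod.snd hKij
  refine keyHom (f (e1 (e2 i))) (f (e1 (e2 j))) M.val (σ1 (e2 i)) (σ1 (e2 j))
    ((hσinj _).comp (Fin.cast_injective _)) (hσ1c _) ?_ ?_ ?_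
  · intro s t hr
    exact cast (congrFun (congrFun hmat s) t).symm hr
  · intro τ
    exact Pi.le_def.mp hcle τ
  · intro τ h0
    exact cast (congrFun hpat τ) h0
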